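/- arXiv:1201.5921 — 4 statements merged into one kernel-verified Lean document; each statement's English description precedes it below -/
import Mathlib

section
/- If (v_1, ..., v_N) is a p-generator sequence of vectors in Z_{p^r}[x]^q, then the set of p-linear combinations of v_1, ..., v_N equals the Z_{p^r}[x]-submodule spanned by v_1, ..., v_N; in particular the p-span is a submodule of Z_{p^r}[x]^q. -/
open Polynomial

open scoped Classical

/-- Support of a polynomial vector: monomials `(degree, position)` ordered lexicographically,
which is the term-over-position (top) ordering. -/
noncomputable def vsupp {R : Type*} [CommRing R] {q : ℕ} (f : Fin q → R[X]) :
    Finset (Lex (ℕ × Fin q)) :=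
  Finset.univ.biUnion fun i => (f i).support.image fun α => toLex (α, i)

/-- Leading monomial w.r.t. the top ordering (`⊥` for the zero vector). -/
noncomputable def vlm {R : Type*} [CommRing R] {q : ℕ} (f : Fin q → R[X]) :
    WithBot (Lex (ℕ × Fin q)) := (vsupp f).max

/-- Degree of the leading monomial (junk value `0` for the zero vector). -/
noncomputable def vdeg {R : Type*} [CommRing R] {q : ℕ} (f : Fin q → R[X]) : ℕ :=
  WithBot.unbotD 0 ((vlm f).map fun m => (ofLex m).1)

/-- Leading position. -/
noncomputable def vlpos {R : Type*} [CommRing R] {q : ℕ} (f : Fin q → R[X]) : WithBot (Fin q) :=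
  (vlm f).map fun m => (ofLex m).2

/-- Leading coefficient. -/
noncomputable def vlc {R : Type*} [CommRing R] {q : ℕ} (f : Fin q → R[X]) : R :=
  WithBot.unbotD 0 ((vlm f).map fun m => (f (ofLex m).2).coeff (ofLex m).1)

/-- `c` is a digit: one of `0,1,…,p-1` (as a ring element). -/
def IsDigit {R : Type*} [CommRing R] (p : ℕ) (c : R) : Prop := ∃ t : ℕ, t < p ∧ c = (t : R)

/-- All coefficients of `a` are digits, i.e. `a ∈ A_p[x]`. -/
def IsDigitPoly {R : Type*} [CommRing R] (p : ℕ) (a : R[X]) : Prop := ∀ n, IsDigit p (a.coeff n)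

/-- The p-span: the set of all p-linear combinations of the `v i`. -/
def pSpan {R : Type*} [CommRing R] {q : ℕ} (p : ℕ) {ι : Type*} [Fintype ι]
    (v : ι → Fin q → R[X]) : Set (Fin q → R[X]) :=
  {f | ∃ a : ι → R[X], (∀ i, IsDigitPoly p (a i)) ∧ f = ∑ i, a i • v i}

/-- p-generator sequence: `p • v i` is a p-linear combination of the later elements
(for the last element, `p • v i = 0`). -/
def IsPGenSeq {R : Type*} [CommRing R] {q : ℕ} (p : ℕ) {ι : Type*} [Fintype ι] [LinearOrder ι]
    (v : ι → Fin q → R[X]) : Prop :=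
  ∀ i : ι, ∃ a : ι → R[X], (∀ j, IsDigitPoly p (a j)) ∧ (∀ j, j ≤ i → a j = 0) ∧
    (p : R) • v i = ∑ j, a j • v j

/-- p-linear independence: only the trivial p-linear combination vanishes. -/
def PLinIndep {R : Type*} [CommRing R] {q : ℕ} (p : ℕ) {ι : Type*} [Fintype ι]
    (v : ι → Fin q → R[X]) : Prop :=
  ∀ a : ι → R[X], (∀ i, IsDigitPoly p (a i)) → ∑ i, a i • v i = 0 → ∀ i, a i = 0

/-- The p-Predictable Leading Monomial (p-PLM) property. -/
def HasPPLM {R : Type*} [CommRing R] {q : ℕ} (p : ℕ) {ι : Type*} [Fintype ι]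
    (v : ι → Fin q → R[X]) : Prop :=
  ∀ a : ι → R[X], (∀ i, IsDigitPoly p (a i)) → ∑ i, a i • v i ≠ 0 →
    vlm (∑ i, a i • v i) = (Finset.univ.filter fun i => a i ≠ 0).sup fun i => vlm (a i • v i)

lemma pgen_aux (p r q N : ℕ) (hp : p.Prime) (hr : 0 < r)
    (v : Fin N → Fin q → Polynomial (ZMod (p ^ r))) (hv : IsPGenSeq p v) :
    ∀ m : ℕ, ∀ a : Fin N → Polynomial (ZMod (p ^ r)), (∀ j : Fin N, (j : ℕ) < N - m → a j = 0) →
      ∃ b : Fin N → Polynomial (ZMod (p ^ r)), (∀ i, IsDigitPoly p (b i)) ∧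
        (∀ j : Fin N, (j : ℕ) < N - m → b j = 0) ∧ ∑ i, a i • v i = ∑ i, b i • v i := by
  haveI : NeZero (p ^ r) := ⟨pow_ne_zero r hp.ne_zero⟩
  set R := ZMod (p ^ r)
  have hdig0 : IsDigitPoly p (0 : R[X]) := fun n => ⟨0, hp.pos, by simp⟩
  intro m
  induction m with
  | zero =>
    intro a ha
    exact ⟨0, fun _ => hdig0, fun _ _ => rfl, by
      rw [Finset.sum_congr rfl fun j _ => by rw [ha j (by omega)]]; simp⟩
  | succ m ih =>
    intro a ha
    by_cases hm : N - (m + 1) < N - m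
    · -- i0 is the index N - (m+1)
      have hi0N : N - (m + 1) < N := by omega
      set i0 : Fin N := ⟨N - (m + 1), hi0N⟩ with hi0
      obtain ⟨e, hedig, hez, hee⟩ := hv i0
      -- digit decomposition of a i0
      have hkey : ∀ x : R, x = ((x.val % p : ℕ) : R) + (p : R) * ((x.val / p : ℕ) : R) := by
        intro x
        have h1 : ((x.val % p + p * (x.val / p) : ℕ) : R) = x := by
          rw [Nat.mod_add_div]; exact ZMod.natCast_rightInverse x
        calc x = ((x.val % p + p * (x.val / p) : ℕ) : R) := h1.symm
        _ = _ := by rw [Nat.cast_add, Nat.cast_mul]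
      set b0 : R[X] := ⟨AddMonoidAlgebra.ofCoeff (Finsupp.mapRange (fun x : R => ((x.val % p : ℕ) : R)) (by simp) (a i0).toFinsupp.coeff)⟩ with hb0
      set c : R[X] := ⟨AddMonoidAlgebra.ofCoeff (Finsupp.mapRange (fun x : R => ((x.val / p : ℕ) : R)) (by simp) (a i0).toFinsupp.coeff)⟩ with hc
      have hb0c : b0.coeff = fun n => ((((a i0).coeff n).val % p : ℕ) : R) := by
        funext n; rw [hb0, coeff_ofFinsupp]; rfl
      have hcc : c.coeff = fun n => ((((a i0).coeff n).val / p : ℕ) : R) := by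
        funext n; rw [hc, coeff_ofFinsupp]; rfl
      have hb0dig : IsDigitPoly p b0 := by
        intro n; rw [hb0c]
        exact ⟨((a i0).coeff n).val % p, Nat.mod_lt _ hp.pos, rfl⟩
      have hsplit : a i0 = b0 + (p : R[X]) * c := by
        ext n
        rw [coeff_add, coeff_natCast_mul, hb0c, hcc]
        exact hkey _
      -- the new coefficient vector
      set a' : Fin N → R[X] := fun i => (if i = i0 then 0 else a i) + c * e i with ha'
      have ha'z : ∀ j : Fin N, (j : ℕ) < N - m → a' j = 0 := by
        intro j hj
        have hje : e j = 0 := hez j (by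
          change (j : ℕ) ≤ (i0 : ℕ)
          simp only [hi0]; omega)
        by_cases h : j = i0
        · subst h; simp [ha', hje]
        · have : (j : ℕ) < N - (m + 1) := by
            rcases lt_or_eq_of_le (Nat.lt_succ_iff.mp (by omega : (j:ℕ) < (N - (m+1)) + 1)) with h1 | h1
            · exact h1
            · exact absurd (Fin.ext h1 : j = i0) h
          simp [ha', h, ha j this, hje]
      obtain ⟨b', hb'dig, hb'z, hb'eq⟩ := ih a' ha'z
      refine ⟨fun i => if i = i0 then b0 else b' i, ?_, ?_, ?_⟩
      · intro i; by_cases h : i = i0 <;> simp [h, hb0dig, hb'dig i]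
      · intro j hj
        have hne : j ≠ i0 := by
          intro h; rw [h] at hj; simp only [hi0] at hj; omega
        simp [hne]
        exact hb'z j (by omega)
      · -- the computation
        have hb'i0 : b' i0 = 0 := hb'z i0 (by simp only [hi0]; omega)
        have step1 : ∑ i, a i • v i
            = ∑ i, ((if i = i0 then b0 else a i) + c * e i) • v i := by
          have h2 : ∑ i, (c * e i) • v i = ((p : R[X]) * c) • v i0 := by
            have : ∀ i, (c * e i) • v i = c • (e i • v i) := fun i => mul_smul c (e i) (v i)
            rw [Finset.sum_congr rfl fun i _ => this i, ← Finset.smul_sum, ← hee]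
            funext k
            simp only [Pi.smul_apply, smul_eq_mul, Polynomial.smul_eq_C_mul, C_eq_natCast]
            ring
          rw [Finset.sum_congr rfl fun i _ => add_smul _ _ _, Finset.sum_add_distrib, h2]
          have h3 : ((p : R[X]) * c) • v i0 = ∑ i, (if i = i0 then (p : R[X]) * c else 0) • v i := by
            rw [Finset.sum_congr rfl fun i _ => ite_smul _ _ _ _]
            simp [Finset.sum_ite_eq']
          rw [h3, ← Finset.sum_add_distrib]
          refine Finset.sum_congr rfl fun i _ => ?_
          by_cases h : i = i0
          · subst h; simp [← add_smul, ← hsplit]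
          · simp [h]
        have step2 : ∑ i, ((if i = i0 then b0 else a i) + c * e i) • v i
            = ∑ i, ((if i = i0 then b0 else 0) + a' i) • v i := by
          refine Finset.sum_congr rfl fun i _ => ?_
          by_cases h : i = i0 <;> simp [ha', h]
        have step3 : ∑ i, ((if i = i0 then b0 else 0) + a' i) • v i
            = ∑ i, (if i = i0 then b0 else 0) • v i + ∑ i, a' i • v i := by
          rw [Finset.sum_congr rfl fun i _ => add_smul _ _ _, Finset.sum_add_distrib]
        rw [step1, step2, step3, hb'eq]
        rw [← Finset.sum_add_distrib]
        refine Finset.sum_congr rfl fun i _ => ?_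
        rw [← add_smul]
        by_cases h : i = i0
        · subst h; simp [hb'i0]
        · simp [h]
    · -- nothing to do at this step
      obtain ⟨b, h1, h2, h3⟩ := ih a (fun j hj => ha j (by omega))
      exact ⟨b, h1, fun j hj => h2 j (by omega), h3⟩

/-- If `(v_1, …, v_N)` is a p-generator sequence in `Z_{p^r}[x]^q`, then its p-span equals the
`Z_{p^r}[x]`-submodule spanned by the `v_i`; in particular the p-span is a submodule. -/
theorem pSpan_eq_span_of_isPGenSeq (p r q N : ℕ) (hp : p.Prime) (hr : 0 < r)
    (v : Fin N → Fin q → Polynomial (ZMod (p ^ r))) (hv : IsPGenSeq p v) :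
    pSpan p v =
      (Submodule.span (Polynomial (ZMod (p ^ r))) (Set.range v) : Set (Fin q → Polynomial (ZMod (p ^ r)))) := by
  ext f
  constructor
  · rintro ⟨a, ha, rfl⟩
    exact Submodule.sum_mem _ fun i _ =>
      Submodule.smul_mem _ _ (Submodule.subset_span ⟨i, rfl⟩)
  · intro hf
    obtain ⟨a, haf⟩ := (Submodule.mem_span_range_iff_exists_fun _).mp hf
    obtain ⟨b, hbdig, _, hbeq⟩ := pgen_aux p r q N hp hr v hv N a (fun j hj => by omega)
    exact ⟨b, hbdig, by rw [← haf, hbeq]⟩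
end

section
/- For any finitely generated submodule M = span{g_1, ..., g_m} of Z_{p^r}[x]^q, M equals the p-span of the p-generator sequence (g_1, p·g_1, ..., p^{r-1}·g_1, g_2, p·g_2, ..., p^{r-1}·g_2, ..., g_m, p·g_m, ..., p^{r-1}·g_m). -/
open Polynomial

open scoped Classical

lemma nat_digit_sum {p : ℕ} (hp : 1 < p) : ∀ (r n : ℕ), n < p ^ r →
    n = ∑ i ∈ Finset.range r, n / p ^ i % p * p ^ i := by
  intro r
  induction r with
  | zero => intro n hn; simpa using Nat.lt_one_iff.mp (by simpa using hn)
  | succ r ih =>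
    intro n hn
    have hp0 : 0 < p := by omega
    have hdiv : n / p < p ^ r := by
      rw [Nat.div_lt_iff_lt_mul hp0]; rw [pow_succ] at hn; exact hn
    have h1 := ih (n / p) hdiv
    rw [Finset.sum_range_succ']
    simp only [pow_zero, pow_succ, Nat.mul_one, Nat.div_one]
    have h2 : ∀ i, n / (p ^ i * p) = n / p / p ^ i := by
      intro i; rw [Nat.div_div_eq_div_mul, mul_comm]
    calc n = n % p + n / p * p := (Nat.mod_add_div' n p).symm
    _ = (∑ i ∈ Finset.range r, n / (p ^ i * p) % p * (p ^ i * p)) + n % p := by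
        rw [add_comm]; congr 1
        rw [h1, Finset.sum_mul]
        apply Finset.sum_congr rfl
        intro i _
        rw [h2 i]; ring

lemma zmod_digit_sum {p r : ℕ} (hp : p.Prime) (c : ZMod (p ^ r)) :
    c = ∑ l : Fin r, ((c.val / p ^ (l : ℕ) % p : ℕ) : ZMod (p ^ r)) * (p : ZMod (p ^ r)) ^ (l : ℕ) := by
  haveI : NeZero (p ^ r) := ⟨pow_ne_zero r hp.ne_zero⟩
  have hlt : c.val < p ^ r := ZMod.val_lt c
  have h := nat_digit_sum hp.one_lt r c.val hlt
  calc c = ((c.val : ℕ) : ZMod (p ^ r)) := by rw [ZMod.natCast_val, ZMod.cast_id]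
  _ = _ := by
      conv_lhs => rw [h]
      push_cast
      rw [Fin.sum_univ_eq_sum_range (fun i => ((c.val / p ^ i % p : ℕ) : ZMod (p^r)) * (p : ZMod (p ^ r)) ^ i)]

lemma poly_digit {p r : ℕ} (hp : p.Prime) (b : (ZMod (p ^ r))[X]) :
    ∃ a : Fin r → (ZMod (p ^ r))[X], (∀ l, IsDigitPoly p (a l)) ∧
      b = ∑ l : Fin r, a l * Polynomial.C ((p : ZMod (p ^ r)) ^ (l : ℕ)) := by
  classical
  set a : Fin r → (ZMod (p ^ r))[X] := fun l =>
    ∑ n ∈ b.support, Polynomial.monomial n ((((b.coeff n).val / p ^ (l : ℕ) % p : ℕ) : ZMod (p ^ r))) with ha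
  have hcoef : ∀ l n, (a l).coeff n = (((b.coeff n).val / p ^ (l : ℕ) % p : ℕ) : ZMod (p ^ r)) := by
    intro l n
    rw [ha]
    simp only [Polynomial.finset_sum_coeff, Polynomial.coeff_monomial]
    rw [Finset.sum_ite_eq' b.support n]
    by_cases hn : n ∈ b.support
    · simp [hn]
    · simp only [hn, if_false]
      rw [Polynomial.notMem_support_iff] at hn
      simp [hn]
  refine ⟨a, ?_, ?_⟩
  · intro l n
    exact ⟨(b.coeff n).val / p ^ (l : ℕ) % p, Nat.mod_lt _ hp.pos, hcoef l n⟩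
  · ext n
    rw [Polynomial.finset_sum_coeff]
    simp only [Polynomial.coeff_mul_C, hcoef]
    exact zmod_digit_sum hp (b.coeff n)

lemma digitpoly_zero {R : Type*} [CommRing R] {p : ℕ} (hp : 0 < p) :
    IsDigitPoly p (0 : R[X]) := fun _ => ⟨0, hp, by simp⟩

lemma digitpoly_one {R : Type*} [CommRing R] {p : ℕ} (hp : 1 < p) :
    IsDigitPoly p (1 : R[X]) := by
  intro n
  rw [Polynomial.coeff_one]
  by_cases h : n = 0
  · exact ⟨1, hp, by simp [h]⟩
  · exact ⟨0, by omega, by simp [h]⟩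

lemma mulC_smul {R : Type*} [CommRing R] {q : ℕ} (a : R[X]) (c : R) (v : Fin q → R[X]) :
    (a * Polynomial.C c) • v = a • (c • v) := by
  funext k
  simp only [Pi.smul_apply, smul_eq_mul, Polynomial.smul_eq_C_mul]
  ring

lemma csmul_eq_C_smul {R : Type*} [CommRing R] {q : ℕ} (c : R) (v : Fin q → R[X]) :
    c • v = (Polynomial.C c : R[X]) • v := by
  funext k
  simp [Polynomial.smul_eq_C_mul]

/-- For a finitely generated submodule `M = span{g_1,…,g_m}` of `Z_{p^r}[x]^q`, `M` equals the
p-span of the p-generator sequence `(g_1, p g_1, …, p^(r-1) g_1, …, g_m, p g_m, …, p^(r-1) g_m)`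
(indexed lexicographically by `(j, l) ↦ p^l • g_j`). -/
theorem span_eq_pSpan_of_powers (p r q m : ℕ) (hp : p.Prime) (hr : 0 < r)
    (g : Fin m → Fin q → Polynomial (ZMod (p ^ r)))
    (w : Lex (Fin m × Fin r) → Fin q → Polynomial (ZMod (p ^ r)))
    (hw : ∀ jl : Lex (Fin m × Fin r),
      w jl = ((p : ZMod (p ^ r)) ^ ((ofLex jl).2 : ℕ)) • g (ofLex jl).1) :
    IsPGenSeq p w ∧
      (Submodule.span (Polynomial (ZMod (p ^ r))) (Set.range g) :
        Set (Fin q → Polynomial (ZMod (p ^ r)))) = pSpan p w := by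
    classical
  set R := ZMod (p ^ r)
  constructor
  · -- IsPGenSeq
    intro i
    by_cases h : ((ofLex i).2 : ℕ) + 1 < r
    · set i' : Lex (Fin m × Fin r) := toLex ((ofLex i).1, ⟨((ofLex i).2 : ℕ) + 1, h⟩) with hi'
      have hlt : i < i' := by
        rw [show i = toLex (ofLex i) from rfl, hi', Prod.Lex.lt_iff]
        right
        exact ⟨rfl, by simp [Fin.lt_def]⟩
      refine ⟨fun k => if k = i' then 1 else 0, ?_, ?_, ?_⟩
      · intro k
        by_cases hk : k = i' <;> simp only [hk, if_true, if_false]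
        · exact digitpoly_one hp.one_lt
        · exact digitpoly_zero hp.pos
      · intro k hk
        have : k ≠ i' := fun hke => absurd (hke ▸ hk) (not_le.mpr hlt)
        simp [this]
      · have hsum : ∑ k, (if k = i' then (1 : R[X]) else 0) • w k = w i' := by
          simp [ite_smul]
        rw [hsum, hw i, hw i', smul_smul]
        congr 1
        show (p : R) * (p : R) ^ ((ofLex i).2 : ℕ) = (p : R) ^ (((ofLex i).2 : ℕ) + 1)
        rw [pow_succ]; ring
    · have hl : ((ofLex i).2 : ℕ) + 1 = r := by
        have := (ofLex i).2.isLt; omega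
      refine ⟨0, fun _ => digitpoly_zero hp.pos, fun _ _ => rfl, ?_⟩
      rw [hw i, smul_smul]
      have hnat : p * p ^ ((ofLex i).2 : ℕ) = p ^ r := by
        rw [← pow_succ']; exact congrArg (p ^ ·) hl
      have : (p : R) * (p : R) ^ ((ofLex i).2 : ℕ) = 0 := by
        calc (p : R) * (p : R) ^ ((ofLex i).2 : ℕ)
            = ((p * p ^ ((ofLex i).2 : ℕ) : ℕ) : R) := by rw [Nat.cast_mul, Nat.cast_pow]
        _ = ((p ^ r : ℕ) : R) := by rw [hnat]
        _ = 0 := ZMod.natCast_self _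
      rw [this, zero_smul]
      simp
  · -- span = pSpan
    ext f
    constructor
    · intro hf
      rw [SetLike.mem_coe, Submodule.mem_span_range_iff_exists_fun] at hf
      obtain ⟨b, hb⟩ := hf
      choose a hadig hasum using fun j => poly_digit hp (b j)
      refine ⟨fun i => a (ofLex i).1 (ofLex i).2, fun i => hadig _ _, ?_⟩
      rw [← Equiv.sum_comp (toLex : (Fin m × Fin r) ≃ Lex (Fin m × Fin r))
        (fun i => a (ofLex i).1 (ofLex i).2 • w i), Fintype.sum_prod_type, ← hb]
      apply Finset.sum_congr rfl
      intro j _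
      rw [hasum j, Finset.sum_smul]
      apply Finset.sum_congr rfl
      intro l _
      rw [mulC_smul, hw (toLex (j, l))]
      rfl
    · rintro ⟨a, -, rfl⟩
      rw [SetLike.mem_coe]
      apply Submodule.sum_mem
      intro i _
      rw [hw i, csmul_eq_C_smul]
      exact Submodule.smul_mem _ _ (Submodule.smul_mem _ _
        (Submodule.subset_span ⟨(ofLex i).1, rfl⟩))
end

section
/- Let M be a submodule of F[x]^q over a field F with a minimal Gröbner basis G = {g_1, ..., g_m} with respect to a fixed monomial ordering (top or pot). Then for any nonzero f ∈ M written as f = a_1 g_1 + ... + a_m g_m with a_i ∈ F[x], the leading monomial of f equals the maximum over all i with a_i ≠ 0 of the leading monomial of a_i g_i (the Predictable Leading Monomial property). -/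
open Polynomial

open scoped Classical

/-- Leading term of a polynomial vector, as a polynomial vector. -/
noncomputable def vlt {R : Type*} [CommRing R] {q : ℕ} (f : Fin q → R[X]) : Fin q → R[X] :=
  WithBot.unbotD 0 ((vlm f).map fun m => fun j : Fin q =>
    if j = (ofLex m).2 then C ((f (ofLex m).2).coeff (ofLex m).1) * X ^ (ofLex m).1 else 0)

/-- The leading term submodule `L(F)`. -/
noncomputable def ltSubmodule {R : Type*} [CommRing R] {q : ℕ} (S : Set (Fin q → R[X])) :
    Submodule R[X] (Fin q → R[X]) :=
  Submodule.span R[X] (vlt '' S)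

/-- `G` is a Gröbner basis of `M`: `G ⊆ M` and `L(G) = L(M)`. -/
def IsGroebner {R : Type*} [CommRing R] {q : ℕ} (M : Submodule R[X] (Fin q → R[X]))
    (G : Finset (Fin q → R[X])) : Prop :=
  (G : Set (Fin q → R[X])) ⊆ M ∧
    ltSubmodule (G : Set (Fin q → R[X])) = ltSubmodule (M : Set (Fin q → R[X]))

/-- One-step reduction of `f` to `h` modulo the finite set `Fs` (Adams–Loustaunau Def. 4.1.1). -/
def ReducesOneStep {R : Type*} [CommRing R] {q : ℕ} (Fs : Finset (Fin q → R[X]))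
    (f h : Fin q → R[X]) : Prop :=
  f ≠ 0 ∧ ∃ (m : ℕ) (jv : Fin m → Fin q → R[X]) (α : Fin m → ℕ) (β : Fin m → R),
    0 < m ∧ (∀ i, jv i ∈ Fs) ∧ (∀ i, jv i ≠ 0) ∧ Function.Injective jv ∧ (∀ i, β i ≠ 0) ∧
    (∀ i, vlm f = (vlm (jv i)).map fun mm => toLex (α i + (ofLex mm).1, (ofLex mm).2)) ∧
    vlt f = ∑ i, (C (β i) * X ^ α i) • vlt (jv i) ∧
    h = f - ∑ i, (C (β i) * X ^ α i) • jv i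

/-- Minimal Gröbner basis: a Gröbner basis each of whose elements is irreducible
modulo the others. -/
def IsMinimalGroebner {R : Type*} [CommRing R] {q : ℕ} (M : Submodule R[X] (Fin q → R[X]))
    (G : Finset (Fin q → R[X])) : Prop :=
  IsGroebner M G ∧ ∀ g ∈ G, ∀ h, ¬ ReducesOneStep (G.erase g) g h

noncomputable def vcoeff {R : Type*} [CommRing R] {q : ℕ} (f : Fin q → R[X])
    (x : Lex (ℕ × Fin q)) : R := (f (ofLex x).2).coeff (ofLex x).1

lemma mem_vsupp_iff {R : Type*} [CommRing R] {q : ℕ} (f : Fin q → R[X])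
    (x : Lex (ℕ × Fin q)) : x ∈ vsupp f ↔ vcoeff f x ≠ 0 := by
  unfold vsupp vcoeff
  simp only [Finset.mem_biUnion, Finset.mem_univ, true_and, Finset.mem_image,
    mem_support_iff]
  constructor
  · rintro ⟨i, α, hα, rfl⟩; exact hα
  · intro h; exact ⟨(ofLex x).2, (ofLex x).1, h, rfl⟩

lemma le_vlm {R : Type*} [CommRing R] {q : ℕ} {f : Fin q → R[X]}
    {x : Lex (ℕ × Fin q)} (h : vcoeff f x ≠ 0) : (x : WithBot (Lex (ℕ × Fin q))) ≤ vlm f :=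
  Finset.le_max ((mem_vsupp_iff f x).2 h)

lemma vcoeff_eq_zero_of_lt {R : Type*} [CommRing R] {q : ℕ} {f : Fin q → R[X]}
    {x : Lex (ℕ × Fin q)} (h : vlm f < (x : WithBot (Lex (ℕ × Fin q)))) : vcoeff f x = 0 := by
  by_contra hc; exact absurd (le_vlm hc) (not_le.2 h)

lemma vcoeff_vlm_ne_zero {R : Type*} [CommRing R] {q : ℕ} {f : Fin q → R[X]}
    {x : Lex (ℕ × Fin q)} (h : vlm f = (x : WithBot (Lex (ℕ × Fin q)))) : vcoeff f x ≠ 0 :=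
  (mem_vsupp_iff f x).1 (Finset.mem_of_max h)

lemma vlm_le {R : Type*} [CommRing R] {q : ℕ} {f : Fin q → R[X]}
    {b : WithBot (Lex (ℕ × Fin q))}
    (h : ∀ x : Lex (ℕ × Fin q), vcoeff f x ≠ 0 → (x : WithBot (Lex (ℕ × Fin q))) ≤ b) :
    vlm f ≤ b :=
  Finset.max_le fun x hx => h x ((mem_vsupp_iff f x).1 hx)

lemma vlm_eq_bot_iff {R : Type*} [CommRing R] {q : ℕ} (f : Fin q → R[X]) :
    vlm f = ⊥ ↔ f = 0 := by
  rw [vlm, Finset.max_eq_bot, Finset.eq_empty_iff_forall_notMem]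
  constructor
  · intro h
    funext i
    ext n
    by_contra hc
    exact h (toLex (n, i)) ((mem_vsupp_iff f _).2 hc)
  · rintro rfl x hx
    rw [mem_vsupp_iff] at hx
    exact hx rfl

lemma vcoeff_sum {R : Type*} [CommRing R] {q n : ℕ} (F : Fin n → Fin q → R[X])
    (x : Lex (ℕ × Fin q)) : vcoeff (∑ i, F i) x = ∑ i, vcoeff (F i) x := by
  unfold vcoeff
  simp [Finset.sum_apply, finset_sum_coeff]

lemma vcoeff_smul {R : Type*} [CommRing R] {q : ℕ} (a : R[X]) (f : Fin q → R[X])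
    (x : Lex (ℕ × Fin q)) : vcoeff (a • f) x = (a * f (ofLex x).2).coeff (ofLex x).1 := rfl

lemma vlm_eq_iff {R : Type*} [CommRing R] {q : ℕ} {f : Fin q → R[X]}
    {x : Lex (ℕ × Fin q)} (h1 : vcoeff f x ≠ 0)
    (h2 : ∀ y : Lex (ℕ × Fin q), x < y → vcoeff f y = 0) :
    vlm f = (x : WithBot (Lex (ℕ × Fin q))) := by
  refine le_antisymm (vlm_le fun y hy => ?_) (le_vlm h1)
  by_contra hc
  push_neg at hc
  rw [WithBot.coe_lt_coe] at hc
  exact hy (h2 y hc)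

lemma natDegree_le_of_vlm {F : Type*} [Field F] {q : ℕ} {f : Fin q → F[X]}
    {d : ℕ} {p : Fin q} (hf : vlm f = ((toLex (d, p) : Lex (ℕ × Fin q)) : WithBot (Lex (ℕ × Fin q))))
    (j : Fin q) : (f j).natDegree ≤ d := by
  by_cases hj : f j = 0
  · simp [hj]
  · have h := le_vlm (f := f) (x := toLex ((f j).natDegree, j))
      (by simpa [vcoeff] using mt leadingCoeff_eq_zero.1 hj)
    rw [hf, WithBot.coe_le_coe] at h
    rcases Prod.Lex.le_iff.1 h with h | h
    · exact h.le
    · exact h.1.le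

lemma natDegree_lt_of_vlm {F : Type*} [Field F] {q : ℕ} {f : Fin q → F[X]}
    {d : ℕ} {p j : Fin q} (hf : vlm f = ((toLex (d, p) : Lex (ℕ × Fin q)) : WithBot (Lex (ℕ × Fin q))))
    (hj : p < j) (hj0 : f j ≠ 0) : (f j).natDegree < d := by
  have h := le_vlm (f := f) (x := toLex ((f j).natDegree, j))
    (by simpa [vcoeff] using mt leadingCoeff_eq_zero.1 hj0)
  rw [hf, WithBot.coe_le_coe] at h
  rcases Prod.Lex.le_iff.1 h with h | h
  · exact h
  · exact absurd h.2 (not_le.2 hj)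

lemma natDegree_eq_of_vlm {F : Type*} [Field F] {q : ℕ} {f : Fin q → F[X]}
    {d : ℕ} {p : Fin q} (hf : vlm f = ((toLex (d, p) : Lex (ℕ × Fin q)) : WithBot (Lex (ℕ × Fin q)))) :
    (f p).natDegree = d := by
  have h1 : (f p).coeff d ≠ 0 := vcoeff_vlm_ne_zero hf
  exact le_antisymm (natDegree_le_of_vlm hf p) (le_natDegree_of_ne_zero h1)

lemma vlm_smul {F : Type*} [Field F] {q : ℕ} {a : F[X]} {f : Fin q → F[X]}
    {d : ℕ} {p : Fin q} (ha : a ≠ 0)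
    (hf : vlm f = ((toLex (d, p) : Lex (ℕ × Fin q)) : WithBot (Lex (ℕ × Fin q)))) :
    vlm (a • f) = ((toLex (a.natDegree + d, p) : Lex (ℕ × Fin q)) : WithBot (Lex (ℕ × Fin q))) := by
  have hfp : (f p).natDegree = d := natDegree_eq_of_vlm hf
  have hfp0 : f p ≠ 0 := fun h => vcoeff_vlm_ne_zero hf (by simp [vcoeff, h])
  refine vlm_eq_iff ?_ ?_
  · rw [vcoeff_smul]
    simp only [ofLex_toLex]
    rw [← hfp, coeff_mul_degree_add_degree]
    exact mul_ne_zero (by simpa using ha) (by simpa using hfp0)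
  · intro y hy
    obtain ⟨β, j⟩ := y
    show (a * f j).coeff β = 0
    rcases Prod.Lex.lt_iff.1 (by simpa using hy) with h | h
    · apply coeff_eq_zero_of_natDegree_lt
      calc (a * f j).natDegree ≤ a.natDegree + (f j).natDegree :=
            natDegree_mul_le
        _ ≤ a.natDegree + d := by gcongr; exact natDegree_le_of_vlm hf _
        _ < β := h
    · by_cases hj0 : f j = 0
      · simp only [hj0, mul_zero, coeff_zero]
      · apply coeff_eq_zero_of_natDegree_lt
        calc (a * f j).natDegree ≤ a.natDegree + (f j).natDegree :=
              natDegree_mul_le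
          _ < a.natDegree + d := by
              have := natDegree_lt_of_vlm (j := j) hf h.2 hj0
              omega
          _ = β := h.1

lemma vlt_eq {F : Type*} [Field F] {q : ℕ} {g : Fin q → F[X]} {d : ℕ} {p : Fin q}
    (h : vlm g = ((toLex (d, p) : Lex (ℕ × Fin q)) : WithBot (Lex (ℕ × Fin q)))) :
    vlt g = fun j => if j = p then C ((g p).coeff d) * X ^ d else 0 := by
  unfold vlt
  rw [h]
  rfl

lemma reduce_contra {F : Type*} [Field F] {q : ℕ} {Fs : Finset (Fin q → F[X])}
    {g1 g2 : Fin q → F[X]} (hmem : g1 ∈ Fs) {d1 d2 : ℕ} {p : Fin q}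
    (h1 : vlm g1 = ((toLex (d1, p) : Lex (ℕ × Fin q)) : WithBot (Lex (ℕ × Fin q))))
    (h2 : vlm g2 = ((toLex (d2, p) : Lex (ℕ × Fin q)) : WithBot (Lex (ℕ × Fin q))))
    (hd : d1 ≤ d2) :
    ReducesOneStep Fs g2
      (g2 - ∑ _i : Fin 1, (C ((g2 p).coeff d2 / (g1 p).coeff d1) * X ^ (d2 - d1)) • g1) := by
  have hg1 : g1 ≠ 0 := fun h => by rw [(vlm_eq_bot_iff g1).2 h] at h1; simp at h1
  have hg2 : g2 ≠ 0 := fun h => by rw [(vlm_eq_bot_iff g2).2 h] at h2; simp at h2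
  have hlc1 : (g1 p).coeff d1 ≠ 0 := vcoeff_vlm_ne_zero h1
  have hlc2 : (g2 p).coeff d2 ≠ 0 := vcoeff_vlm_ne_zero h2
  refine ⟨hg2, 1, fun _ => g1, fun _ => d2 - d1, fun _ => (g2 p).coeff d2 / (g1 p).coeff d1,
    one_pos, fun _ => hmem, fun _ => hg1, Function.injective_of_subsingleton _,
    fun _ => div_ne_zero hlc2 hlc1, fun _ => ?_, ?_, rfl⟩
  · rw [h1, h2, WithBot.map_coe]
    simp only [ofLex_toLex]
    rw [Nat.sub_add_cancel hd]
  · rw [vlt_eq h2, Fin.sum_univ_one]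
    rw [vlt_eq h1]
    funext j
    simp only [Pi.smul_apply, smul_eq_mul, mul_ite, mul_zero]
    by_cases hj : j = p
    · simp only [hj, if_pos rfl]
      rw [mul_mul_mul_comm, ← C_mul, div_mul_cancel₀ _ hlc1, ← pow_add,
        Nat.sub_add_cancel hd]
    · simp [hj]

lemma plm_contra {F : Type*} [Field F] {q m : ℕ} (g : Fin m → Fin q → F[X])
    (hginj : Function.Injective g)
    (hmin : ∀ gg ∈ Finset.image g Finset.univ, ∀ h,
      ¬ ReducesOneStep ((Finset.image g Finset.univ).erase gg) gg h)
    {k l : Fin m} (hkl : k ≠ l) {dk dl : ℕ} {p : Fin q}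
    (hk : vlm (g k) = ((toLex (dk, p) : Lex (ℕ × Fin q)) : WithBot (Lex (ℕ × Fin q))))
    (hl : vlm (g l) = ((toLex (dl, p) : Lex (ℕ × Fin q)) : WithBot (Lex (ℕ × Fin q))))
    (hd : dk ≤ dl) : False := by
  refine hmin (g l) (by simp) _ (reduce_contra ?_ hk hl hd)
  rw [Finset.mem_erase]
  exact ⟨fun h => hkl (hginj h), by simp⟩

theorem predictable_leading_monomial_aux {F : Type*} [Field F] {q m : ℕ}
    (M : Submodule (Polynomial F) (Fin q → Polynomial F))
    (g : Fin m → Fin q → Polynomial F) (hginj : Function.Injective g)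
    (hGB : ∀ gg ∈ Finset.image g Finset.univ, ∀ h,
      ¬ ReducesOneStep ((Finset.image g Finset.univ).erase gg) gg h)
    (a : Fin m → Polynomial F) (f : Fin q → Polynomial F)
    (hf : f = ∑ i, a i • g i) (hf0 : f ≠ 0) :
    vlm f = (Finset.univ.filter fun i => a i ≠ 0).sup fun i => vlm (a i • g i) := by
  classical
  set s := Finset.univ.filter (fun i => a i ≠ 0) with hs
  have hcoeff : ∀ x, vcoeff f x = ∑ i, vcoeff (a i • g i) x := by
    intro x; rw [hf, vcoeff_sum]
  have hmem_s : ∀ {i : Fin m} {x}, vcoeff (a i • g i) x ≠ 0 → i ∈ s := by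
    intro i x hi
    simp only [hs, Finset.mem_filter, Finset.mem_univ, true_and]
    intro h
    exact hi (by simp [vcoeff, h])
  have hA : vlm f ≤ s.sup fun i => vlm (a i • g i) := by
    apply vlm_le
    intro x hx
    rw [hcoeff] at hx
    obtain ⟨i, _, hi⟩ := Finset.exists_ne_zero_of_sum_ne_zero hx
    exact le_trans (le_vlm hi) (Finset.le_sup (f := fun i => vlm (a i • g i)) (hmem_s hi))
  rcases eq_or_lt_of_le hA with h | hlt
  · exact h
  exfalso
  obtain ⟨X, hX⟩ : ∃ x : Lex (ℕ × Fin q), (s.sup fun i => vlm (a i • g i)) = ↑x := by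
    have hne : (s.sup fun i => vlm (a i • g i)) ≠ ⊥ := by
      intro h; rw [h] at hlt; exact not_lt_bot hlt
    rcases WithBot.ne_bot_iff_exists.1 hne with ⟨x, hx⟩
    exact ⟨x, hx.symm⟩
  have hsne : s.Nonempty := by
    rw [Finset.nonempty_iff_ne_empty]
    intro he
    rw [he, Finset.sup_empty] at hX
    exact (WithBot.bot_ne_coe hX : False)
  obtain ⟨k, hkmem, hk⟩ := Finset.exists_mem_eq_sup s hsne fun i => vlm (a i • g i)
  rw [hX] at hk
  have hfX : vcoeff f X = 0 := vcoeff_eq_zero_of_lt (hX ▸ hlt)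
  have hkc : vcoeff (a k • g k) X ≠ 0 := vcoeff_vlm_ne_zero hk.symm
  obtain ⟨l, hlk, hlc⟩ : ∃ l, l ≠ k ∧ vcoeff (a l • g l) X ≠ 0 := by
    by_contra hcon
    push_neg at hcon
    have := Finset.sum_eq_single_of_mem k (Finset.mem_univ k)
      (fun i _ hik => hcon i hik) (f := fun i => vcoeff (a i • g i) X)
    rw [hcoeff, this] at hfX
    exact hkc hfX
  have hl : vlm (a l • g l) = (X : WithBot (Lex (ℕ × Fin q))) := by
    refine le_antisymm ?_ (le_vlm hlc)
    rw [← hX]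
    exact Finset.le_sup (f := fun i => vlm (a i • g i)) (hmem_s hlc)
  -- extract data
  have hak : a k ≠ 0 := by
    have := hmem_s hkc; simpa [hs] using this
  have hal : a l ≠ 0 := by
    have := hmem_s hlc; simpa [hs] using this
  have hgk : g k ≠ 0 := by
    intro h
    rw [(vlm_eq_bot_iff _).2 (by simp [h] : a k • g k = 0)] at hk
    exact (WithBot.bot_ne_coe hk.symm : False)
  have hgl : g l ≠ 0 := by
    intro h
    rw [(vlm_eq_bot_iff _).2 (by simp [h] : a l • g l = 0)] at hl
    exact (WithBot.bot_ne_coe hl : False)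
  obtain ⟨xk, hxk⟩ := WithBot.ne_bot_iff_exists.1 (fun h => hgk ((vlm_eq_bot_iff _).1 h))
  obtain ⟨xl, hxl⟩ := WithBot.ne_bot_iff_exists.1 (fun h => hgl ((vlm_eq_bot_iff _).1 h))
  obtain ⟨dk, pk⟩ := xk
  obtain ⟨dl, pl⟩ := xl
  have hsk := vlm_smul hak hxk.symm
  have hsl := vlm_smul hal hxl.symm
  rw [hk.symm] at hsk
  rw [hl] at hsl
  -- X = toLex (deg a k + dk, pk) = toLex (deg a l + dl, pl)
  have heq : (((a k).natDegree + dk : ℕ), pk) = (((a l).natDegree + dl : ℕ), pl) := by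
    have := hsk.symm.trans hsl
    rw [WithBot.coe_inj] at this
    exact this
  have hp : pk = pl := congrArg Prod.snd heq
  have hdeq : (a k).natDegree + dk = (a l).natDegree + dl := congrArg Prod.fst heq
  rcases le_total dk dl with hd | hd
  · exact plm_contra g hginj hGB (Ne.symm hlk) hxk.symm (hp ▸ hxl.symm) hd
  · exact plm_contra g hginj hGB hlk (hp ▸ hxl.symm) hxk.symm hd


/-- Predictable Leading Monomial property: if `G = {g_1,…,g_m}` is a minimal Gröbner basis of a
submodule `M ⊆ F[x]^q` and `0 ≠ f = a_1 g_1 + ⋯ + a_m g_m`, then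
`lm f = max_{a_i ≠ 0} lm (a_i g_i)`. -/
theorem predictable_leading_monomial {F : Type*} [Field F] {q m : ℕ}
    (M : Submodule (Polynomial F) (Fin q → Polynomial F))
    (g : Fin m → Fin q → Polynomial F) (hginj : Function.Injective g)
    (hGB : IsMinimalGroebner M (Finset.image g Finset.univ))
    (a : Fin m → Polynomial F) (f : Fin q → Polynomial F)
    (hf : f = ∑ i, a i • g i) (hf0 : f ≠ 0) :
    vlm f = (Finset.univ.filter fun i => a i ≠ 0).sup fun i => vlm (a i • g i) :=
  predictable_leading_monomial_aux M g hginj hGB.2 a f hf hf0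
end

section
/- Let M ⊆ F[x]^q be a submodule of rank q and degree δ, and let G = {g_1, ..., g_q} ⊆ M. Then G is a minimal Gröbner basis of M if and only if (1) the sum of the degrees of g_1, ..., g_q equals δ, and (2) the leading positions of g_1, ..., g_q are pairwise distinct. -/
open Polynomial

open scoped Classical

section API
variable {R : Type*} [CommRing R] {q : ℕ} {f : Fin q → R[X]}

lemma mem_vsupp {m : Lex (ℕ × Fin q)} : m ∈ vsupp f ↔ (f (ofLex m).2).coeff (ofLex m).1 ≠ 0 := by
  simp only [vsupp, Finset.mem_biUnion, Finset.mem_univ, Finset.mem_image, true_and,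
    mem_support_iff]
  constructor
  · rintro ⟨i, a, ha, rfl⟩; exact ha
  · intro h; exact ⟨(ofLex m).2, (ofLex m).1, h, rfl⟩

lemma vsupp_eq_empty : vsupp f = ∅ ↔ f = 0 := by
  constructor
  · intro h
    funext i
    ext a
    by_contra ha
    have : toLex (a, i) ∈ vsupp f := mem_vsupp.2 (by simpa using ha)
    simp [h] at this
  · rintro rfl
    ext m
    simp [mem_vsupp]

lemma vlm_eq_bot_iff_s10 : vlm f = ⊥ ↔ f = 0 := by
  rw [vlm, Finset.max_eq_bot, vsupp_eq_empty]

/-- full spec of the leading monomial of a nonzero vector -/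
lemma vlm_spec (hf : f ≠ 0) : ∃ (d : ℕ) (p : Fin q),
    vlm f = (toLex (d, p) : Lex (ℕ × Fin q)) ∧ (f p).coeff d ≠ 0 ∧
      ∀ a i, (f i).coeff a ≠ 0 → toLex (a, i) ≤ toLex (d, p) := by
  have h : vlm f ≠ ⊥ := fun h => hf (vlm_eq_bot_iff_s10.1 h)
  obtain ⟨m, hm⟩ := Option.ne_none_iff_exists'.1 h
  refine ⟨(ofLex m).1, (ofLex m).2, by exact hm, mem_vsupp.1 (Finset.mem_of_max hm), ?_⟩
  intro a i hai
  have hmem : toLex (a, i) ∈ vsupp f := mem_vsupp.2 (by simpa using hai)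
  have h2 := Finset.le_max hmem
  rw [show (vsupp f).max = vlm f from rfl, hm] at h2
  exact_mod_cast WithBot.coe_le_coe.1 h2

lemma vlm_eq_of {m : Lex (ℕ × Fin q)} (h1 : m ∈ vsupp f) (h2 : ∀ m' ∈ vsupp f, m' ≤ m) :
    vlm f = m := by
  apply le_antisymm
  · exact Finset.max_le (fun b hb => WithBot.coe_le_coe.2 (h2 b hb))
  · exact Finset.le_max h1

variable {d : ℕ} {p : Fin q}

lemma vdeg_of (h : vlm f = (toLex (d, p) : Lex (ℕ × Fin q))) : vdeg f = d := by
  rw [vdeg, h]; rfl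

lemma vlpos_of (h : vlm f = (toLex (d, p) : Lex (ℕ × Fin q))) : vlpos f = p := by
  rw [vlpos, h]; rfl

lemma vlc_of (h : vlm f = (toLex (d, p) : Lex (ℕ × Fin q))) : vlc f = (f p).coeff d := by
  rw [vlc, h]; rfl

lemma vlt_of (h : vlm f = (toLex (d, p) : Lex (ℕ × Fin q))) :
    vlt f = fun j => if j = p then C ((f p).coeff d) * X ^ d else 0 := by
  rw [vlt, h]; rfl

lemma vlt_zero : vlt (0 : Fin q → R[X]) = 0 := by
  rw [vlt, vlm_eq_bot_iff_s10.2 rfl]; rfl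

end API

section API2
variable {F : Type*} [Field F] {q : ℕ}

lemma toLex_pair_le {a d : ℕ} {i p : Fin q} (h : a ≤ d) (h2 : a = d → i ≤ p) :
    (toLex (a, i) : Lex (ℕ × Fin q)) ≤ toLex (d, p) := by
  rw [Prod.Lex.le_iff]
  rcases lt_or_eq_of_le h with h' | h'
  · exact Or.inl h'
  · exact Or.inr ⟨h', h2 h'⟩

lemma toLex_pair_le_elim {a d : ℕ} {i p : Fin q}
    (h : (toLex (a, i) : Lex (ℕ × Fin q)) ≤ toLex (d, p)) : a ≤ d := by
  rw [Prod.Lex.le_iff] at h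
  rcases h with h | h
  · exact le_of_lt h
  · exact le_of_eq h.1

lemma vlm_single {j : Fin q} {c : Polynomial F} (hc : c ≠ 0) :
    vlm (Pi.single j c) = (toLex (c.natDegree, j) : Lex (ℕ × Fin q)) := by
  apply vlm_eq_of
  · rw [mem_vsupp]
    simpa using mt Polynomial.leadingCoeff_eq_zero.1 hc
  · intro m' hm'
    rw [mem_vsupp] at hm'
    have hj : (ofLex m').2 = j := by
      by_contra hne
      rw [Pi.single_apply, if_neg hne] at hm'
      simp at hm'
    rw [hj, Pi.single_apply, if_pos rfl] at hm'
    have hm'' : m' = toLex ((ofLex m').1, j) := by rw [← hj]; rfl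
    rw [hm'']
    exact toLex_pair_le (Polynomial.le_natDegree_of_ne_zero hm') (fun _ => le_rfl)

lemma vlt_smul_eq {f u : Fin q → Polynomial F} (hf : f ≠ 0) (hu : u ≠ 0)
    (hpos : vlpos u = vlpos f) (hdeg : vdeg u ≤ vdeg f) :
    vlt f = (Polynomial.C (vlc f / vlc u) * Polynomial.X ^ (vdeg f - vdeg u)) • vlt u := by
  obtain ⟨d, p, hlm, hcoeff, _⟩ := vlm_spec hf
  obtain ⟨d', p', hlm', hcoeff', _⟩ := vlm_spec hu
  have hp : p' = p := by
    have := (vlpos_of hlm') ▸ (vlpos_of hlm) ▸ hpos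
    exact_mod_cast this
  subst hp
  rw [vdeg_of hlm', vdeg_of hlm] at hdeg
  rw [vlt_of hlm, vlt_of hlm', vdeg_of hlm, vdeg_of hlm', vlc_of hlm, vlc_of hlm']
  funext j
  by_cases hj : j = p'
  · subst hj
    simp only [Pi.smul_apply, smul_eq_mul, eq_self_iff_true, if_true]
    rw [mul_mul_mul_comm, ← Polynomial.C_mul, div_mul_cancel₀ _ hcoeff', ← pow_add,
      Nat.sub_add_cancel hdeg]
  · simp [hj]

lemma covers_of_mem_span {G : Finset (Fin q → Polynomial F)} {h : Fin q → Polynomial F}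
    (hh : h ≠ 0)
    (hmem : vlt h ∈ Submodule.span (Polynomial F) (vlt '' (G : Set (Fin q → Polynomial F)))) :
    ∃ u ∈ G, u ≠ 0 ∧ vlpos u = vlpos h ∧ vdeg u ≤ vdeg h := by
  obtain ⟨d, p, hlm, hcoeff, _⟩ := vlm_spec hh
  obtain ⟨n, c, w, hw⟩ := Submodule.mem_span_set'.1 hmem
  have hvu : ∀ i : Fin n, ∃ u ∈ G, vlt u = (w i : Fin q → Polynomial F) := by
    intro i
    obtain ⟨u, hu, huw⟩ := (w i).2
    exact ⟨u, hu, huw⟩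
  choose u hu huw using hvu
  have hsum : ∑ i, c i • vlt (u i) = vlt h := by
    rw [show (fun i => c i • vlt (u i)) = fun i => c i • (w i : Fin q → Polynomial F) from
      funext fun i => by rw [huw i]]
    exact hw
  have hco : (∑ i, c i • vlt (u i)) p = Polynomial.C ((h p).coeff d) * Polynomial.X ^ d := by
    rw [hsum, vlt_of hlm]; simp
  rw [Finset.sum_apply] at hco
  have hne : (∑ i ∈ Finset.univ, (c i • vlt (u i)) p).coeff d ≠ 0 := by
    rw [hco]
    simpa using hcoeff
  rw [Polynomial.finset_sum_coeff] at hne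
  obtain ⟨i, _, hi⟩ := Finset.exists_ne_zero_of_sum_ne_zero hne
  by_cases hui : u i = 0
  · rw [hui, vlt_zero] at hi
    simp at hi
  obtain ⟨d', p', hlm', hcoeff', _⟩ := vlm_spec hui
  rw [vlt_of hlm'] at hi
  simp only [Pi.smul_apply, smul_eq_mul] at hi
  by_cases hpp : p = p'
  swap
  · rw [if_neg hpp] at hi; simp at hi
  rw [if_pos hpp] at hi
  have hdle : d' ≤ d := by
    by_contra hlt
    rw [show Polynomial.C ((u i p').coeff d') * Polynomial.X ^ d'
        = (Polynomial.C ((u i p').coeff d')) * Polynomial.X ^ d' from rfl, ← mul_assoc,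
      Polynomial.coeff_mul_X_pow', if_neg (by omega)] at hi
    exact hi rfl
  exact ⟨u i, hu i, hui, by rw [vlpos_of hlm', vlpos_of hlm, hpp], by
    rw [vdeg_of hlm', vdeg_of hlm]; exact hdle⟩

lemma mem_span_of_covers {G : Finset (Fin q → Polynomial F)} {h : Fin q → Polynomial F}
    (hh : h ≠ 0) (hc : ∃ u ∈ G, u ≠ 0 ∧ vlpos u = vlpos h ∧ vdeg u ≤ vdeg h) :
    vlt h ∈ Submodule.span (Polynomial F) (vlt '' (G : Set (Fin q → Polynomial F))) := by
  obtain ⟨u, huG, hu, hpos, hdeg⟩ := hc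
  rw [vlt_smul_eq hh hu hpos hdeg]
  exact Submodule.smul_mem _ _ (Submodule.subset_span (Set.mem_image_of_mem _ huG))

end API2

section API3
variable {F : Type*} [Field F] {q : ℕ}

lemma vlc_ne_zero {f : Fin q → Polynomial F} (hf : f ≠ 0) : vlc f ≠ 0 := by
  obtain ⟨d, p, hlm, hc, -⟩ := vlm_spec hf
  rw [vlc_of hlm]; exact hc

lemma isGroebner_iff_covers {M : Submodule (Polynomial F) (Fin q → Polynomial F)}
    {G : Finset (Fin q → Polynomial F)} (hGM : (G : Set (Fin q → Polynomial F)) ⊆ M) :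
    IsGroebner M G ↔
      ∀ h ∈ M, h ≠ 0 → ∃ u ∈ G, u ≠ 0 ∧ vlpos u = vlpos h ∧ vdeg u ≤ vdeg h := by
  constructor
  · rintro ⟨-, heq⟩ h hM hh
    apply covers_of_mem_span hh
    rw [show Submodule.span (Polynomial F) (vlt '' (G : Set (Fin q → Polynomial F)))
      = ltSubmodule (G : Set (Fin q → Polynomial F)) from rfl, heq]
    exact Submodule.subset_span (Set.mem_image_of_mem _ hM)
  · intro hcov
    refine ⟨hGM, le_antisymm (Submodule.span_mono (Set.image_mono hGM)) ?_⟩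
    rw [ltSubmodule, Submodule.span_le]
    rintro - ⟨h, hM, rfl⟩
    by_cases hh : h = 0
    · rw [hh, vlt_zero]; exact Submodule.zero_mem _
    · exact mem_span_of_covers hh (hcov h hM hh)

lemma reduces_elim {Fs : Finset (Fin q → Polynomial F)} {f h : Fin q → Polynomial F}
    (hred : ReducesOneStep Fs f h) :
    f ≠ 0 ∧ ∃ u ∈ Fs, u ≠ 0 ∧ vlpos u = vlpos f ∧ vdeg u ≤ vdeg f := by
  obtain ⟨hf, m, jv, α, β, hm, hFs, hz, -, -, hvlm, -, -⟩ := hred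
  refine ⟨hf, ?_⟩
  set i : Fin m := ⟨0, hm⟩
  obtain ⟨d, p, hlm, -, -⟩ := vlm_spec hf
  obtain ⟨d', p', hlm', -, -⟩ := vlm_spec (hz i)
  have := hvlm i
  rw [hlm, hlm', WithBot.map_coe, WithBot.coe_inj] at this
  have h1 : d = α i + d' ∧ p = p' := by
    have h2 := congrArg ofLex this
    exact ⟨congrArg Prod.fst h2, congrArg Prod.snd h2⟩
  refine ⟨jv i, hFs i, hz i, ?_, ?_⟩
  · rw [vlpos_of hlm', vlpos_of hlm, h1.2]
  · rw [vdeg_of hlm', vdeg_of hlm, h1.1]; omega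

lemma reduces_intro {Fs : Finset (Fin q → Polynomial F)} {f : Fin q → Polynomial F}
    (hf : f ≠ 0) {u : Fin q → Polynomial F} (hFs : u ∈ Fs) (hu : u ≠ 0)
    (hpos : vlpos u = vlpos f) (hdeg : vdeg u ≤ vdeg f) :
    ∃ h, ReducesOneStep Fs f h := by
  refine ⟨f - ∑ i : Fin 1, (C (vlc f / vlc u) * X ^ (vdeg f - vdeg u)) • u,
    hf, 1, fun _ => u, fun _ => vdeg f - vdeg u, fun _ => vlc f / vlc u,
    Nat.one_pos, fun _ => hFs, fun _ => hu, fun a b _ => Subsingleton.elim a b,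
    fun _ => div_ne_zero (vlc_ne_zero hf) (vlc_ne_zero hu), ?_, ?_, rfl⟩
  · intro i
    obtain ⟨d, p, hlm, -, -⟩ := vlm_spec hf
    obtain ⟨d', p', hlm', -, -⟩ := vlm_spec hu
    have hp : p' = p := by
      have := (vlpos_of hlm') ▸ (vlpos_of hlm) ▸ hpos
      exact_mod_cast this
    rw [vdeg_of hlm', vdeg_of hlm] at hdeg
    rw [hlm, hlm', WithBot.map_coe, WithBot.coe_inj, vdeg_of hlm, vdeg_of hlm', hp]
    have : d - d' + d' = d := Nat.sub_add_cancel hdeg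
    exact congrArg toLex (Prod.ext this.symm rfl)
  · rw [Fin.sum_univ_one]
    exact vlt_smul_eq hf hu hpos hdeg

lemma exists_single_mem {M : Submodule (Polynomial F) (Fin q → Polynomial F)}
    (hrank : Module.rank (Polynomial F) ↥M = q) (j : Fin q) :
    ∃ h, h ∈ M ∧ h ≠ 0 ∧ vlpos h = (j : WithBot (Fin q)) := by
  have hex : ∃ c : Polynomial F, c ≠ 0 ∧ Pi.single j c ∈ M := by
    by_contra hcon
    push_neg at hcon
    obtain ⟨b, hb⟩ := exists_linearIndependent_of_le_rank (le_of_eq hrank.symm)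
    have hb' : LinearIndependent (Polynomial F) (fun i => (b i : Fin q → Polynomial F)) :=
      hb.map' M.subtype M.ker_subtype
    set w : Fin (q + 1) → (Fin q → Polynomial F) :=
      Fin.cons (Pi.single j 1) (fun i => (b i : Fin q → Polynomial F)) with hw
    have hwli : LinearIndependent (Polynomial F) w := by
      rw [Fintype.linearIndependent_iff]
      intro gc hsum
      rw [Fin.sum_univ_succ] at hsum
      have hmem : ∑ i : Fin q, gc i.succ • w i.succ ∈ M := by
        apply Submodule.sum_mem
        intro i _
        exact Submodule.smul_mem _ _ (by simp only [hw, Fin.cons_succ]; exact (b i).2)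
      have h0 : gc 0 = 0 := by
        by_contra hgc
        have : gc 0 • w 0 ∈ M := by
          rw [← sub_zero (gc 0 • w 0), ← hsum]
          simpa using Submodule.neg_mem _ hmem
        have heq : gc 0 • w 0 = Pi.single j (gc 0) := by
          simp only [hw, Fin.cons_zero]
          funext k
          rw [Pi.smul_apply, Pi.single_apply, Pi.single_apply]
          split <;> simp
        exact hcon (gc 0) hgc (heq ▸ this)
      have hsum' : ∑ i : Fin q, gc i.succ • (fun i => (b i : Fin q → Polynomial F)) i = 0 := by
        simp only [hw, Fin.cons_succ] at hsum
        rw [h0, zero_smul, zero_add] at hsum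
        exact hsum
      have hz := (Fintype.linearIndependent_iff.1 hb') (fun i => gc i.succ) hsum'
      intro i
      rcases Fin.eq_zero_or_eq_succ i with rfl | ⟨i', rfl⟩
      · exact h0
      · exact hz i'
    have hle := hwli.cardinal_lift_le_rank
    rw [rank_fun'] at hle
    simp only [Cardinal.mk_fin, Fintype.card_fin, Cardinal.lift_natCast,
      Nat.cast_le] at hle
    omega
  obtain ⟨c, hc, hmem⟩ := hex
  refine ⟨Pi.single j c, hmem, ?_, vlpos_of (vlm_single hc)⟩
  intro hz
  apply hc
  have := congrFun hz j
  simpa using this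

end API3

/-- Characterization of minimal Gröbner bases of a full-rank module: let `M ⊆ F[x]^q` have rank
`q` and degree `δ` (the degree sum of a minimal Gröbner basis), and `g_1,…,g_q ∈ M` nonzero.
Then `{g_1,…,g_q}` is a minimal Gröbner basis of `M` iff the degrees of the `g_i` sum to `δ`
and their leading positions are pairwise distinct. -/
theorem isMinimalGroebner_iff {F : Type*} [Field F] {q : ℕ}
    (M : Submodule (Polynomial F) (Fin q → Polynomial F))
    (hrank : Module.rank (Polynomial F) ↥M = q) (δ : ℕ)
    (gb : Fin q → Fin q → Polynomial F) (hgbinj : Function.Injective gb)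
    (hgb : IsMinimalGroebner M (Finset.image gb Finset.univ))
    (hδ : ∑ i, vdeg (gb i) = δ)
    (g : Fin q → Fin q → Polynomial F) (hgM : ∀ i, g i ∈ M) (hgz : ∀ i, g i ≠ 0) :
    IsMinimalGroebner M (Finset.image g Finset.univ) ↔
      (∑ i, vdeg (g i) = δ ∧ ∀ i j, i ≠ j → vlpos (g i) ≠ vlpos (g j)) := by
  classical
  set G0 : Finset (Fin q → Polynomial F) := Finset.image gb Finset.univ with hG0def
  set G : Finset (Fin q → Polynomial F) := Finset.image g Finset.univ with hGdef
  have hG0M : (G0 : Set (Fin q → Polynomial F)) ⊆ M := hgb.1.1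
  have hGM : (G : Set (Fin q → Polynomial F)) ⊆ M := by
    intro x hx
    rw [hGdef, Finset.coe_image] at hx
    obtain ⟨i, -, rfl⟩ := hx
    exact hgM i
  have cov0 := (isGroebner_iff_covers hG0M).1 hgb.1
  -- indices of gb elements with each leading position
  have key0 : ∀ j : Fin q, ∃ i, gb i ≠ 0 ∧ vlpos (gb i) = (j : WithBot (Fin q)) := by
    intro j
    obtain ⟨h, hM, hh, hp⟩ := exists_single_mem hrank j
    obtain ⟨u, huG0, hu, hup, -⟩ := cov0 h hM hh
    rw [hG0def, Finset.mem_image] at huG0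
    obtain ⟨i, -, rfl⟩ := huG0
    exact ⟨i, hu, hup.trans hp⟩
  choose idx hidx1 hidx2 using key0
  have hidxbij : Function.Bijective idx := by
    rw [← Finite.injective_iff_bijective]
    intro a b hab
    have h1 := hidx2 a
    have h2 := hidx2 b
    rw [hab, h2] at h1
    exact_mod_cast h1.symm
  set σ : Fin q ≃ Fin q := Equiv.ofBijective idx hidxbij with hσdef
  have hσ : ∀ j, σ j = idx j := fun j => rfl
  have hgbz : ∀ i, gb i ≠ 0 := by
    intro i
    have := hidx1 (σ.symm i)
    rwa [show idx (σ.symm i) = i from σ.apply_symm_apply i] at this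
  have hgbpos : ∀ i, vlpos (gb i) = ((σ.symm i : Fin q) : WithBot (Fin q)) := by
    intro i
    have := hidx2 (σ.symm i)
    rwa [show idx (σ.symm i) = i from σ.apply_symm_apply i] at this
  set Db : Fin q → ℕ := fun j => vdeg (gb (σ j)) with hDbdef
  have hδ' : ∑ j, Db j = δ := by
    rw [← hδ, hDbdef]
    exact Equiv.sum_comp σ (fun i => vdeg (gb i))
  have hDb_min : ∀ h, h ∈ M → h ≠ 0 → ∀ j : Fin q, vlpos h = (j : WithBot (Fin q)) →
      Db j ≤ vdeg h := by
    intro h hM hh j hpos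
    obtain ⟨u, huG0, hu, hup, hud⟩ := cov0 h hM hh
    rw [hG0def, Finset.mem_image] at huG0
    obtain ⟨i0, -, rfl⟩ := huG0
    have h1 : ((σ.symm i0 : Fin q) : WithBot (Fin q)) = (j : WithBot (Fin q)) :=
      (hgbpos i0).symm.trans (hup.trans hpos)
    have h2 : σ.symm i0 = j := by exact_mod_cast h1
    have h3 : i0 = σ j := by rw [← h2, σ.apply_symm_apply]
    simp only [hDbdef]
    rw [← h3]
    exact hud
  constructor
  · -- forward direction
    intro hmin
    have covG := (isGroebner_iff_covers hGM).1 hmin.1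
    have keyG : ∀ j : Fin q, ∃ i, vlpos (g i) = (j : WithBot (Fin q)) := by
      intro j
      obtain ⟨h, hM, hh, hp⟩ := exists_single_mem hrank j
      obtain ⟨u, huG, hu, hup, -⟩ := covG h hM hh
      rw [hGdef, Finset.mem_image] at huG
      obtain ⟨i, -, rfl⟩ := huG
      exact ⟨i, hup.trans hp⟩
    choose τ hτ using keyG
    have hτbij : Function.Bijective τ := by
      rw [← Finite.injective_iff_bijective]
      intro a b hab
      have h1 := hτ a
      rw [hab, hτ b] at h1
      exact_mod_cast h1.symm
    set ρ : Fin q ≃ Fin q := Equiv.ofBijective τ hτbij with hρdef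
    have hρ : ∀ j, vlpos (g (ρ j)) = (j : WithBot (Fin q)) := fun j => hτ j
    have hginj : Function.Injective g := by
      have hcard1 : (Finset.univ : Finset (Fin q)).card ≤ G.card := by
        apply Finset.card_le_card_of_injOn (fun j => g (τ j))
        · intro j _
          exact Finset.mem_image_of_mem g (Finset.mem_univ _)
        · intro a _ b _ hab
          have h1 := hτ a
          rw [show g (τ a) = g (τ b) from hab, hτ b] at h1
          exact_mod_cast h1.symm
      have hcard2 : G.card = (Finset.univ : Finset (Fin q)).card :=
        le_antisymm (Finset.card_image_le) hcard1
      have := Finset.card_image_iff.1 hcard2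
      rw [Finset.coe_univ] at this
      exact Set.injOn_univ.1 this
    have hdist : ∀ i j, i ≠ j → vlpos (g i) ≠ vlpos (g j) := by
      intro i j hne heq
      have hne' : g j ≠ g i := fun hc => hne (hginj hc.symm)
      rcases le_total (vdeg (g j)) (vdeg (g i)) with hle | hle
      · have hmem : g j ∈ G.erase (g i) :=
          Finset.mem_erase.2 ⟨hne', Finset.mem_image_of_mem g (Finset.mem_univ _)⟩
        obtain ⟨h, hred⟩ := reduces_intro (hgz i) hmem (hgz j) heq.symm hle
        exact hmin.2 (g i) (Finset.mem_image_of_mem g (Finset.mem_univ _)) h hred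
      · have hmem : g i ∈ G.erase (g j) :=
          Finset.mem_erase.2 ⟨fun hc => hne' hc.symm, Finset.mem_image_of_mem g (Finset.mem_univ _)⟩
        obtain ⟨h, hred⟩ := reduces_intro (hgz j) hmem (hgz i) heq hle
        exact hmin.2 (g j) (Finset.mem_image_of_mem g (Finset.mem_univ _)) h hred
    refine ⟨?_, hdist⟩
    have hdeg_eq : ∀ j, vdeg (g (ρ j)) = Db j := by
      intro j
      have h1 : Db j ≤ vdeg (g (ρ j)) := hDb_min _ (hgM _) (hgz _) j (hρ j)
      have h2 : vdeg (g (ρ j)) ≤ Db j := by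
        have hmemM : gb (σ j) ∈ M := hG0M (Finset.mem_coe.2 (Finset.mem_image_of_mem gb
          (Finset.mem_univ _)))
        obtain ⟨u, huG, hu, hupos, hudeg⟩ := covG (gb (σ j)) hmemM (hgbz (σ j))
        have hposj : vlpos u = (j : WithBot (Fin q)) := by
          rw [hupos, hgbpos (σ j), σ.symm_apply_apply]
        rw [hGdef, Finset.mem_image] at huG
        obtain ⟨i, -, rfl⟩ := huG
        have hieq : i = ρ j := by
          by_contra hne
          exact hdist i (ρ j) hne (hposj.trans (hρ j).symm)
        rw [← hieq]
        exact hudeg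
      omega
    calc ∑ i, vdeg (g i) = ∑ j, vdeg (g (ρ j)) := (Equiv.sum_comp ρ (fun i => vdeg (g i))).symm
      _ = ∑ j, Db j := Finset.sum_congr rfl (fun j _ => hdeg_eq j)
      _ = δ := hδ'
  · -- backward direction
    rintro ⟨hsum, hdist⟩
    have hπex : ∀ i, ∃ p : Fin q, vlpos (g i) = (p : WithBot (Fin q)) := by
      intro i
      obtain ⟨d, p, hlm, -, -⟩ := vlm_spec (hgz i)
      exact ⟨p, vlpos_of hlm⟩
    choose π hπ using hπex
    have hπbij : Function.Bijective π := by
      rw [← Finite.injective_iff_bijective]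
      intro a b hab
      by_contra hne
      apply hdist a b hne
      rw [hπ a, hπ b, hab]
    set e : Fin q ≃ Fin q := Equiv.ofBijective π hπbij with hedef
    have hge : ∀ i, Db (π i) ≤ vdeg (g i) := fun i => hDb_min _ (hgM i) (hgz i) _ (hπ i)
    have hsums : ∑ i, Db (π i) = ∑ i, vdeg (g i) := by
      rw [hsum, ← hδ']
      exact Equiv.sum_comp e Db
    have hdeq : ∀ i, vdeg (g i) = Db (π i) := by
      by_contra hcon
      push_neg at hcon
      obtain ⟨i0, hi0⟩ := hcon
      have hlt : Db (π i0) < vdeg (g i0) := lt_of_le_of_ne (hge i0) (fun h => hi0 h.symm)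
      have : ∑ i, Db (π i) < ∑ i, vdeg (g i) :=
        Finset.sum_lt_sum (fun i _ => hge i) ⟨i0, Finset.mem_univ _, hlt⟩
      omega
    constructor
    · rw [isGroebner_iff_covers hGM]
      intro h hM hh
      obtain ⟨d, p, hlm, -, -⟩ := vlm_spec hh
      have hp : vlpos h = (p : WithBot (Fin q)) := vlpos_of hlm
      have hpe : π (e.symm p) = p := e.apply_symm_apply p
      refine ⟨g (e.symm p), Finset.mem_image_of_mem g (Finset.mem_univ _), hgz _, ?_, ?_⟩
      · rw [hπ (e.symm p), hp, hpe]
      · rw [hdeq (e.symm p), hpe]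
        exact hDb_min h hM hh p hp
    · intro gg hgg h hred
      obtain ⟨-, u, huer, hu, hupos, hudeg⟩ := reduces_elim hred
      rw [hGdef, Finset.mem_image] at hgg
      obtain ⟨i, -, rfl⟩ := hgg
      have huG : u ∈ G := Finset.mem_of_mem_erase huer
      rw [hGdef, Finset.mem_image] at huG
      obtain ⟨i', -, rfl⟩ := huG
      have hne : i' ≠ i := fun hc => (Finset.ne_of_mem_erase huer) (by rw [hc])
      exact hdist i' i hne hupos
end
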